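/- Let I ≥ 0, J > 0, K ≥ 0 with K·I·(e^J − 1) < J. Suppose y : [0, 1] → ℝ is continuous, nonnegative, and satisfies y(x) ≤ I + ∫_x^1 (J·y(z) + K·y(z)²) dz for every x ∈ [0, 1]. Then for every x ∈ [0, 1], y(x) ≤ I·J·e^{J(1−x)} / (J − K·I·(e^{J(1−x)} − 1)); in particular sup_{x ∈ [0,1]} y(x) ≤ I·J·e^{J} / (J − K·I·(e^{J} − 1)). -/

import Mathlib

open Set intervalIntegral

lemma aux_bernoulli (I J K : ℝ) (hI : 0 < I) (hJ : 0 < J) (hK : 0 ≤ K)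
    (hsmall : K * I * (Real.exp J - 1) < J)
    (f : ℝ → ℝ) (hf_cont : Continuous f) (hf_nonneg : ∀ x, 0 ≤ f x)
    (hineq : ∀ x ∈ Icc (0:ℝ) 1,
      f x ≤ I + ∫ z in x..(1:ℝ), (J * f z + K * (f z) ^ 2)) :
    ∀ x ∈ Icc (0:ℝ) 1,
      f x ≤ I * J * Real.exp (J * (1 - x)) / (J - K * I * (Real.exp (J * (1 - x)) - 1)) := by
  set g : ℝ → ℝ := fun z => J * f z + K * (f z) ^ 2 with hg_def
  have hg_cont : Continuous g := by fun_prop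
  have hg_nonneg : ∀ z, 0 ≤ g z := fun z =>
    add_nonneg (mul_nonneg hJ.le (hf_nonneg z)) (mul_nonneg hK (sq_nonneg _))
  set u : ℝ → ℝ := fun x => I + ∫ z in x..(1:ℝ), g z with hu_def
  have hu_deriv : ∀ x : ℝ, HasDerivAt u (-(g x)) x := by
    intro x
    have h1 : HasDerivAt (fun t => ∫ z in (1:ℝ)..t, g z) (g x) x :=
      intervalIntegral.integral_hasDerivAt_right (hg_cont.intervalIntegrable _ _)
        (hg_cont.stronglyMeasurableAtFilter _ _) hg_cont.continuousAt
    have heq : u = fun t => I - ∫ z in (1:ℝ)..t, g z := by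
      funext t
      simp [hu_def, intervalIntegral.integral_symm (1:ℝ) t, sub_eq_add_neg]
    rw [heq]
    simpa using h1.const_sub I
  have hu_cont : Continuous u := by
    rw [continuous_iff_continuousAt]; exact fun x => (hu_deriv x).continuousAt
  have hu_ge : ∀ x ∈ Icc (0:ℝ) 1, I ≤ u x := by
    intro x hx
    have h0 : 0 ≤ ∫ z in x..(1:ℝ), g z :=
      intervalIntegral.integral_nonneg hx.2 (fun z _ => hg_nonneg z)
    simp only [hu_def]; linarith
  have hu_pos : ∀ x ∈ Icc (0:ℝ) 1, 0 < u x := fun x hx => lt_of_lt_of_le hI (hu_ge x hx)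
  have hfu : ∀ x ∈ Icc (0:ℝ) 1, f x ≤ u x := fun x hx => hineq x hx
  -- exponential factor
  set E : ℝ → ℝ := fun x => Real.exp (J * (1 - x)) with hE_def
  have hE_deriv : ∀ x : ℝ, HasDerivAt E (-J * E x) x := by
    intro x
    have h1 : HasDerivAt (fun t : ℝ => J * (1 - t)) (-J) x := by
      simpa using ((hasDerivAt_id x).const_sub 1).const_mul J
    simpa [hE_def, mul_comm] using h1.exp
  have hE_pos : ∀ x : ℝ, 0 < E x := fun x => Real.exp_pos _
  -- D := E/u + (K/J) * E is antitone on [0,1]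
  set D : ℝ → ℝ := fun x => E x / u x + (K / J) * E x with hD_def
  have hD_deriv : ∀ x ∈ Icc (0:ℝ) 1,
      HasDerivAt D ((-J * E x * u x - E x * (-(g x))) / (u x) ^ 2 + (K / J) * (-J * E x)) x := by
    intro x hx
    exact ((hE_deriv x).div (hu_deriv x) (hu_pos x hx).ne').add
      ((hE_deriv x).const_mul (K / J))
  have hD_deriv_nonpos : ∀ x ∈ Icc (0:ℝ) 1,
      (-J * E x * u x - E x * (-(g x))) / (u x) ^ 2 + (K / J) * (-J * E x) ≤ 0 := by
    intro x hx
    have hux := hu_pos x hx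
    have hfx := hf_nonneg x
    have hfux := hfu x hx
    have hgu : g x - J * u x ≤ K * (u x) ^ 2 := by
      have hsq : (f x) ^ 2 ≤ (u x) ^ 2 := pow_le_pow_left₀ hfx hfux 2
      have : K * (f x) ^ 2 ≤ K * (u x) ^ 2 := mul_le_mul_of_nonneg_left hsq hK
      simp only [hg_def]
      nlinarith [mul_le_mul_of_nonneg_left hfux hJ.le]
    have hnum : -J * E x * u x - E x * (-(g x)) ≤ K * E x * (u x) ^ 2 := by
      have := mul_le_mul_of_nonneg_left hgu (hE_pos x).le
      nlinarith
    have hKJ : (K / J) * (-J * E x) = -(K * E x) := by field_simp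
    have h1 : (-J * E x * u x - E x * (-(g x))) / (u x) ^ 2 ≤ K * E x := by
      rw [div_le_iff₀ (by positivity : (0:ℝ) < (u x) ^ 2)]
      nlinarith
    rw [hKJ]; linarith
  have hD_anti : AntitoneOn D (Icc (0:ℝ) 1) := by
    apply antitoneOn_of_deriv_nonpos (convex_Icc 0 1)
    · apply ContinuousOn.add
      · have hE_cont : Continuous E := by
          simp only [hE_def]; fun_prop
        exact hE_cont.continuousOn.div hu_cont.continuousOn (fun x hx => (hu_pos x hx).ne')
      · have hE_cont : Continuous E := by
          simp only [hE_def]; fun_prop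
        exact (continuous_const.mul hE_cont).continuousOn
    · intro x hx
      rw [interior_Icc] at hx
      exact (hD_deriv x (Ioo_subset_Icc_self hx)).differentiableAt.differentiableWithinAt
    · intro x hx
      rw [interior_Icc] at hx
      have hx' := Ioo_subset_Icc_self hx
      rw [(hD_deriv x hx').deriv]
      exact hD_deriv_nonpos x hx'
  -- evaluate at 1
  have hu1 : u 1 = I := by simp [hu_def]
  have hE1 : E 1 = 1 := by simp [hE_def]
  have hD1 : D 1 = 1 / I + K / J := by simp [hD_def, hE1, hu1]
  intro x hx
  have hDx : D 1 ≤ D x := hD_anti hx (by constructor <;> norm_num) hx.2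
  -- so E x / u x ≥ 1/I - (K/J)(E x - 1)
  have hlow : 1 / I - (K / J) * (E x - 1) ≤ E x / u x := by
    rw [hD1] at hDx
    simp only [hD_def] at hDx
    linarith [hDx]
  have ht1 : 1 ≤ E x := Real.one_le_exp (by nlinarith [hx.2])
  have htJ : E x ≤ Real.exp J := Real.exp_le_exp.mpr (by nlinarith [hx.1])
  have hden_pos : 0 < J - K * I * (E x - 1) := by
    have h1 : K * I * (E x - 1) ≤ K * I * (Real.exp J - 1) :=
      mul_le_mul_of_nonneg_left (by linarith) (by positivity)
    linarith
  have hc_eq : 1 / I - (K / J) * (E x - 1) = (J - K * I * (E x - 1)) / (I * J) := by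
    field_simp
  have hc_pos : 0 < (J - K * I * (E x - 1)) / (I * J) := by positivity
  have hux := hu_pos x hx
  -- u x ≤ E x / c
  have hu_le : u x ≤ E x * (I * J) / (J - K * I * (E x - 1)) := by
    have hlow' : (J - K * I * (E x - 1)) / (I * J) ≤ E x / u x := by
      rw [← hc_eq]; exact hlow
    rw [div_le_div_iff₀ (by positivity : (0:ℝ) < I * J) hux] at hlow'
    rw [le_div_iff₀ hden_pos]
    nlinarith
  calc f x ≤ u x := hfu x hx
    _ ≤ E x * (I * J) / (J - K * I * (E x - 1)) := hu_le
    _ = I * J * E x / (J - K * I * (E x - 1)) := by ring_nf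

/-- The nonlinear comparison-lemma step used in the proof of Lemma 5.3: a nonnegative
continuous function satisfying the backward integral inequality
`y(x) ≤ I + ∫_x^1 (J y + K y²)` is dominated by the explicit solution
`I J e^{J(1−x)}/(J − K I (e^{J(1−x)} − 1))` of the Bernoulli ODE, provided
`K I (e^J − 1) < J`. -/
theorem backward_bernoulli_comparison (I J K : ℝ) (hI : 0 ≤ I) (hJ : 0 < J) (hK : 0 ≤ K)
    (hsmall : K * I * (Real.exp J - 1) < J)
    (y : ℝ → ℝ) (hy_cont : ContinuousOn y (Icc 0 1))
    (hy_nonneg : ∀ x ∈ Icc (0:ℝ) 1, 0 ≤ y x)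
    (hy_ineq : ∀ x ∈ Icc (0:ℝ) 1,
      y x ≤ I + ∫ z in x..(1:ℝ), (J * y z + K * (y z) ^ 2)) :
    (∀ x ∈ Icc (0:ℝ) 1,
      y x ≤ I * J * Real.exp (J * (1 - x)) / (J - K * I * (Real.exp (J * (1 - x)) - 1))) ∧
    (⨆ x : Icc (0:ℝ) 1, y x) ≤ I * J * Real.exp J / (J - K * I * (Real.exp J - 1)) := by
  -- extend y continuously to all of ℝ
  set p : ℝ → ℝ := fun x => max 0 (min 1 x) with hp_def
  have hp_cont : Continuous p := by fun_prop
  have hp_mem : ∀ x, p x ∈ Icc (0:ℝ) 1 :=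
    fun x => ⟨le_max_left _ _, max_le zero_le_one (min_le_left _ _)⟩
  have hp_id : ∀ x ∈ Icc (0:ℝ) 1, p x = x := by
    intro x hx
    simp only [hp_def]
    rw [min_eq_right hx.2, max_eq_right hx.1]
  set ye : ℝ → ℝ := fun x => y (p x) with hye_def
  have hye_cont : Continuous ye := hy_cont.comp_continuous hp_cont hp_mem
  have hye_nonneg : ∀ x, 0 ≤ ye x := fun x => hy_nonneg _ (hp_mem x)
  have hye_eq : ∀ x ∈ Icc (0:ℝ) 1, ye x = y x := by
    intro x hx; simp only [hye_def, hp_id x hx]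
  have hint_eq : ∀ x ∈ Icc (0:ℝ) 1,
      (∫ z in x..(1:ℝ), (J * y z + K * (y z) ^ 2))
        = ∫ z in x..(1:ℝ), (J * ye z + K * (ye z) ^ 2) := by
    intro x hx
    apply intervalIntegral.integral_congr
    intro z hz
    rw [uIcc_of_le hx.2] at hz
    have hz' : z ∈ Icc (0:ℝ) 1 := ⟨le_trans hx.1 hz.1, hz.2⟩
    show J * y z + K * (y z) ^ 2 = J * ye z + K * (ye z) ^ 2
    rw [hye_eq z hz']
  -- pointwise bound via the positive-I lemma and ε → 0⁺
  have key : ∀ x ∈ Icc (0:ℝ) 1,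
      y x ≤ I * J * Real.exp (J * (1 - x)) / (J - K * I * (Real.exp (J * (1 - x)) - 1)) := by
    intro x hx
    set t : ℝ := Real.exp (J * (1 - x)) with ht_def
    have ht1 : 1 ≤ t := Real.one_le_exp (by nlinarith [hx.2])
    have htJ : t ≤ Real.exp J := Real.exp_le_exp.mpr (by nlinarith [hx.1])
    have hden0 : 0 < J - K * I * (t - 1) := by
      have h1 : K * I * (t - 1) ≤ K * I * (Real.exp J - 1) :=
        mul_le_mul_of_nonneg_left (by linarith) (by positivity)
      linarith
    set F : ℝ → ℝ := fun ε => (I + ε) * J * t / (J - K * (I + ε) * (t - 1)) with hF_def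
    have hF0 : F 0 = I * J * t / (J - K * I * (t - 1)) := by simp [hF_def]
    have htend : Filter.Tendsto F (nhdsWithin 0 (Ioi 0)) (nhds (F 0)) := by
      have hc : ContinuousAt F 0 := by
        apply ContinuousAt.div
        · fun_prop
        · fun_prop
        · simpa using hden0.ne'
      exact hc.tendsto.mono_left nhdsWithin_le_nhds
    have hev : ∀ᶠ ε in nhdsWithin (0:ℝ) (Ioi 0), y x ≤ F ε := by
      have hopen : ∀ᶠ ε in nhds (0:ℝ), K * (I + ε) * (Real.exp J - 1) < J := by
        have hco : Continuous fun ε : ℝ => K * (I + ε) * (Real.exp J - 1) := by fun_prop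
        have h0 : (0:ℝ) ∈ {ε : ℝ | K * (I + ε) * (Real.exp J - 1) < J} := by
          simpa using hsmall
        exact (isOpen_lt hco continuous_const).mem_nhds h0
      filter_upwards [eventually_nhdsWithin_of_eventually_nhds hopen,
        self_mem_nhdsWithin] with ε hεsmall hεpos
      have hεpos' : (0:ℝ) < ε := hεpos
      have hb := aux_bernoulli (I + ε) J K (by linarith) hJ hK hεsmall ye hye_cont hye_nonneg
        (by
          intro x' hx'
          rw [hye_eq x' hx']
          have := hy_ineq x' hx'
          rw [hint_eq x' hx'] at this
          linarith) x hx
      rw [hye_eq x hx] at hb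
      simp only [hF_def, ht_def]
      exact hb
    have := ge_of_tendsto htend hev
    rw [hF0] at this
    exact this
  constructor
  · exact key
  · haveI : Nonempty ↥(Icc (0:ℝ) 1) := ⟨⟨0, by norm_num⟩⟩
    apply ciSup_le
    rintro ⟨x, hx⟩
    refine (key x hx).trans ?_
    set t : ℝ := Real.exp (J * (1 - x)) with ht_def
    have ht1 : 1 ≤ t := Real.one_le_exp (by nlinarith [hx.2])
    have htJ : t ≤ Real.exp J := Real.exp_le_exp.mpr (by nlinarith [hx.1])
    have hdenJ : 0 < J - K * I * (Real.exp J - 1) := by linarith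
    have hden0 : 0 < J - K * I * (t - 1) := by
      have h1 : K * I * (t - 1) ≤ K * I * (Real.exp J - 1) :=
        mul_le_mul_of_nonneg_left (by linarith) (by positivity)
      linarith
    apply div_le_div₀ (by positivity) (mul_le_mul_of_nonneg_left htJ (by positivity)) hdenJ
    have h1 : K * I * (t - 1) ≤ K * I * (Real.exp J - 1) :=
      mul_le_mul_of_nonneg_left (by linarith) (by positivity)
    linarith
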